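/- Let A, B be n×n real symmetric matrices and let X, Y be commuting real symmetric matrices that are jointly diagonalized by an orthogonal matrix U (i.e., UᵀXU and UᵀYU are diagonal). Then off(UᵀAU) + off(UᵀBU) ≤ ‖A−X‖_F² + ‖B−Y‖_F², where off(M) = ∑_{i≠j} m_{ij}². Consequently J(A,B) ≤ C_sym(A,B), where C_sym is the infimum of ‖A−X‖_F² + ‖B−Y‖_F² over commuting symmetric pairs (X,Y). -/

import Mathlib

open Matrix

open Finset

/-- The Frobenius norm of a real square matrix. -/
noncomputable def frob {n : ℕ} (A : Matrix (Fin n) (Fin n) ℝ) : ℝ :=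
  Real.sqrt (∑ i, ∑ j, (A i j) ^ 2)

/-- Sum of squares of the off-diagonal entries. -/
def off {n : ℕ} (M : Matrix (Fin n) (Fin n) ℝ) : ℝ :=
  ∑ i, ∑ j, if i = j then 0 else (M i j) ^ 2

lemma off_nonneg {n : ℕ} (M : Matrix (Fin n) (Fin n) ℝ) : 0 ≤ off M := by
  unfold off
  apply Finset.sum_nonneg; intro i _
  apply Finset.sum_nonneg; intro j _
  by_cases h : i = j <;> simp [h] <;> positivity

lemma sum_sq_eq_trace {n : ℕ} (M : Matrix (Fin n) (Fin n) ℝ) :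
    ∑ i, ∑ j, (M i j) ^ 2 = Matrix.trace (Mᵀ * M) := by
  simp only [Matrix.trace, Matrix.diag, Matrix.mul_apply, Matrix.transpose_apply, sq]
  exact Finset.sum_comm

lemma frob_conj_inv {n : ℕ} (M U : Matrix (Fin n) (Fin n) ℝ) (hU : Uᵀ * U = 1) :
    ∑ i, ∑ j, ((Uᵀ * M * U) i j) ^ 2 = ∑ i, ∑ j, (M i j) ^ 2 := by
  have h2 : U * Uᵀ = 1 := mul_eq_one_comm.mp hU
  rw [sum_sq_eq_trace, sum_sq_eq_trace]
  have e1 : (Uᵀ * M * U)ᵀ * (Uᵀ * M * U) = Uᵀ * (Mᵀ * M * U) := by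
    calc (Uᵀ * M * U)ᵀ * (Uᵀ * M * U) = Uᵀ * Mᵀ * (U * Uᵀ) * M * U := by
          simp [Matrix.transpose_mul, Matrix.mul_assoc]
      _ = Uᵀ * (Mᵀ * M * U) := by rw [h2]; simp [Matrix.mul_assoc]
  rw [e1, Matrix.trace_mul_comm, Matrix.mul_assoc, h2, Matrix.mul_one]

lemma off_le_frob {n : ℕ} (A X U : Matrix (Fin n) (Fin n) ℝ) (hU : Uᵀ * U = 1)
    (hdX : (Uᵀ * X * U).IsDiag) : off (Uᵀ * A * U) ≤ frob (A - X) ^ 2 := by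
  have hnn : (0:ℝ) ≤ ∑ i, ∑ j, ((A - X) i j) ^ 2 := by
    apply Finset.sum_nonneg; intro i _; apply Finset.sum_nonneg; intro j _; positivity
  rw [frob, Real.sq_sqrt hnn, ← frob_conj_inv (A - X) U hU]
  have hrw : Uᵀ * (A - X) * U = Uᵀ * A * U - Uᵀ * X * U := by
    rw [Matrix.mul_sub, Matrix.sub_mul]
  rw [hrw]
  unfold off
  apply Finset.sum_le_sum; intro i _
  apply Finset.sum_le_sum; intro j _
  by_cases h : i = j
  · simp only [h, if_pos rfl]; positivity
  · simp [h, Matrix.sub_apply, hdX h]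

/-- Simultaneous diagonalization of commuting real symmetric matrices. -/
lemma exists_joint_diag {n : ℕ} (X Y : Matrix (Fin n) (Fin n) ℝ)
    (hX : X.IsSymm) (hY : Y.IsSymm) (hcomm : X * Y = Y * X) :
    ∃ U : Matrix (Fin n) (Fin n) ℝ, Uᵀ * U = 1 ∧ (Uᵀ * X * U).IsDiag ∧ (Uᵀ * Y * U).IsDiag := by
  classical
  set E := EuclideanSpace ℝ (Fin n)
  set Tx := Matrix.toEuclideanLin X with hTxdef
  set Ty := Matrix.toEuclideanLin Y with hTydef
  have hXH : X.IsHermitian := by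
    rw [Matrix.IsHermitian, Matrix.conjTranspose_eq_transpose_of_trivial]; exact hX
  have hYH : Y.IsHermitian := by
    rw [Matrix.IsHermitian, Matrix.conjTranspose_eq_transpose_of_trivial]; exact hY
  have hTx : Tx.IsSymmetric := Matrix.isHermitian_iff_isSymmetric.mp hXH
  have hTy : Ty.IsSymmetric := Matrix.isHermitian_iff_isSymmetric.mp hYH
  have hc : Commute Tx Ty := by
    have : Tx * Ty = Ty * Tx := by
      apply LinearMap.ext; intro v
      show Tx (Ty v) = Ty (Tx v)
      show WithLp.toLp 2 (X *ᵥ (Y *ᵥ v.ofLp)) = WithLp.toLp 2 (Y *ᵥ (X *ᵥ v.ofLp))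
      rw [Matrix.mulVec_mulVec, Matrix.mulVec_mulVec, hcomm]
    exact this
  have hd0 := LinearMap.IsSymmetric.directSum_isInternal_of_commute hTx hTy hc
  have hof0 := LinearMap.IsSymmetric.orthogonalFamily_eigenspace_inf_eigenspace hTx hTy
  set V : ℝ × ℝ → Submodule ℝ E :=
    fun i => Module.End.eigenspace Tx i.2 ⊓ Module.End.eigenspace Ty i.1 with hV
  haveI : Fintype {i : ℝ × ℝ // V i ≠ ⊥} :=
    (DirectSum.IsInternal.submodule_iSupIndep hd0).fintypeNeBotOfFiniteDimensional
  have hd : DirectSum.IsInternal (fun i : {i : ℝ × ℝ // V i ≠ ⊥} => V i) :=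
    DirectSum.isInternal_ne_bot_iff.mpr hd0
  have hof : OrthogonalFamily ℝ (fun i : {i : ℝ × ℝ // V i ≠ ⊥} => V i.1)
      (fun i => (V i.1).subtypeₗᵢ) :=
    hof0.comp Subtype.val_injective
  let b0 := hd.collectedOrthonormalBasis hof fun i => stdOrthonormalBasis ℝ (V i.1)
  have hcard : Fintype.card (Σ i : {i : ℝ × ℝ // V i ≠ ⊥}, Fin (Module.finrank ℝ (V i.1))) = n := by
    rw [← Module.finrank_eq_card_basis b0.toBasis, finrank_euclideanSpace_fin]
  let e := Fintype.equivFinOfCardEq hcard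
  let b := b0.reindex e
  have hmem : ∀ k, b k ∈ V ((e.symm k).1).1 := by
    intro k
    have := hd.collectedOrthonormalBasis_mem hof
      (fun i => stdOrthonormalBasis ℝ (V i.1)) (e.symm k)
    simpa [b, OrthonormalBasis.coe_reindex] using this
  set ν : Fin n → ℝ := fun k => (((e.symm k).1).1).2 with hν
  set μ : Fin n → ℝ := fun k => (((e.symm k).1).1).1 with hμ
  have hXe : ∀ k, Tx (b k) = ν k • b k := fun k =>
    Module.End.mem_eigenspace_iff.mp (hmem k).1
  have hYe : ∀ k, Ty (b k) = μ k • b k := fun k =>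
    Module.End.mem_eigenspace_iff.mp (hmem k).2
  set U : Matrix (Fin n) (Fin n) ℝ := Matrix.of fun i k => b k i with hUdef
  have hUU : Uᵀ * U = 1 := by
    ext k l
    have hin : (inner ℝ (b k) (b l) : ℝ) = if k = l then 1 else 0 :=
      orthonormal_iff_ite.mp b.orthonormal k l
    rw [Matrix.mul_apply, Matrix.one_apply]
    rw [← hin, EuclideanSpace.inner_eq_star_dotProduct]
    simp only [dotProduct]
    apply Finset.sum_congr rfl
    intro x _
    show U x k * U x l = _
    rw [mul_comm]
    rfl
  have hdiag : ∀ (M : Matrix (Fin n) (Fin n) ℝ) (lam : Fin n → ℝ),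
      (∀ l, (Matrix.toEuclideanLin M) (b l) = lam l • b l) → (Uᵀ * M * U).IsDiag := by
    intro M lam hlam i j hij
    have hcol : ∀ l i', (M * U) i' l = lam l * U i' l := by
      intro l i'
      have h1 : (M *ᵥ (b l)) i' = (lam l • b l) i' := by rw [← hlam l]; rfl
      have h2 : (M *ᵥ (b l)) i' = ∑ j', M i' j' * b l j' := rfl
      rw [Matrix.mul_apply]
      simp only [hUdef, Matrix.of_apply]
      rw [← h2, h1]
      rfl
    have : (Uᵀ * M * U) i j = lam j * ((Uᵀ * U) i j) := by
      rw [Matrix.mul_assoc, Matrix.mul_apply, Matrix.mul_apply, Finset.mul_sum]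
      apply Finset.sum_congr rfl
      intro x _
      rw [hcol]
      ring
    rw [this, hUU, Matrix.one_apply_ne hij, mul_zero]
  exact ⟨U, hUU, hdiag X ν hXe, hdiag Y μ hYe⟩

/-- If X, Y are commuting symmetric matrices jointly diagonalized by an
orthogonal U, then off(UᵀAU) + off(UᵀBU) ≤ ‖A−X‖_F² + ‖B−Y‖_F²;
consequently J(A,B) ≤ C_sym(A,B). -/
theorem joint_diag_le_closest_commuting_sym {n : ℕ}
    (A B X Y U : Matrix (Fin n) (Fin n) ℝ)
    (hA : A.IsSymm) (hB : B.IsSymm) (hX : X.IsSymm) (hY : Y.IsSymm)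
    (hcomm : X * Y = Y * X) (hU : Uᵀ * U = 1)
    (hdX : (Uᵀ * X * U).IsDiag) (hdY : (Uᵀ * Y * U).IsDiag) :
    off (Uᵀ * A * U) + off (Uᵀ * B * U) ≤
        frob (A - X) ^ 2 + frob (B - Y) ^ 2 ∧
    sInf {c : ℝ | ∃ V : Matrix (Fin n) (Fin n) ℝ, Vᵀ * V = 1 ∧
        c = off (Vᵀ * A * V) + off (Vᵀ * B * V)} ≤
    sInf {c : ℝ | ∃ X' Y' : Matrix (Fin n) (Fin n) ℝ, X'.IsSymm ∧ Y'.IsSymm ∧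
        X' * Y' = Y' * X' ∧ c = frob (A - X') ^ 2 + frob (B - Y') ^ 2} := by
  constructor
  · exact add_le_add (off_le_frob A X U hU hdX) (off_le_frob B Y U hU hdY)
  · set S := {c : ℝ | ∃ V : Matrix (Fin n) (Fin n) ℝ, Vᵀ * V = 1 ∧
        c = off (Vᵀ * A * V) + off (Vᵀ * B * V)} with hS
    set T := {c : ℝ | ∃ X' Y' : Matrix (Fin n) (Fin n) ℝ, X'.IsSymm ∧ Y'.IsSymm ∧
        X' * Y' = Y' * X' ∧ c = frob (A - X') ^ 2 + frob (B - Y') ^ 2} with hT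
    have hSbdd : BddBelow S := by
      refine ⟨0, ?_⟩
      rintro c ⟨V, hV, rfl⟩
      exact add_nonneg (off_nonneg _) (off_nonneg _)
    have hTne : T.Nonempty := by
      refine ⟨frob (A - 0) ^ 2 + frob (B - 0) ^ 2, 0, 0, ?_, ?_, by simp, rfl⟩
      · exact Matrix.isSymm_zero
      · exact Matrix.isSymm_zero
    apply le_csInf hTne
    rintro c ⟨X', Y', hX', hY', hcomm', rfl⟩
    obtain ⟨W, hW, hWX, hWY⟩ := exists_joint_diag X' Y' hX' hY' hcomm'
    have hmemS : off (Wᵀ * A * W) + off (Wᵀ * B * W) ∈ S := ⟨W, hW, rfl⟩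
    calc sInf S ≤ off (Wᵀ * A * W) + off (Wᵀ * B * W) := csInf_le hSbdd hmemS
      _ ≤ frob (A - X') ^ 2 + frob (B - Y') ^ 2 :=
          add_le_add (off_le_frob A X' W hW hWX) (off_le_frob B Y' W hW hWY)
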